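/- Let ℓ_t, ℓ̂_t be convex functions with ℓ̂_t(W_t) = ℓ_t(W_t) and ℓ̂_t(W) ≤ ℓ_t(W) for all W in a set 𝒲, where W_t = argmin_W [λ‖W‖² + ∑_{s<t} ℓ̂_s(W) + φ_t(W)] and each ℓ̂_t is quadratic with Hessian contribution making L̂_t(W) = λ‖W‖² + ∑_{s≤t} ℓ̂_s(W) a quadratic with positive definite Hessian 2A_t. Then for any W ∈ 𝒲, ∑_{t=1}^T (ℓ_t(W_t) - ℓ_t(W)) ≤ λ‖W‖² + (1/4)∑_{t=1}^T [‖∇φ_t(W_t) - ∇ℓ_t(W_t)‖²_{A_t⁻¹} - ‖∇φ_t(W_t)‖²_{A_{t-1}⁻¹}]. -/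

import Mathlib

open Matrix

section helpers
variable {n : ℕ}

lemma sftrl_dot_symm (M : Matrix (Fin n) (Fin n) ℝ) (h : Mᵀ = M)
    (v w : Fin n → ℝ) : v ⬝ᵥ M.mulVec w = w ⬝ᵥ M.mulVec v := by
  rw [Matrix.dotProduct_mulVec, ← Matrix.mulVec_transpose, h, dotProduct_comm]

lemma sftrl_sum_mulVec {ι : Type*} (s : Finset ι) (M : ι → Matrix (Fin n) (Fin n) ℝ)
    (x : Fin n → ℝ) : (∑ i ∈ s, M i).mulVec x = ∑ i ∈ s, (M i).mulVec x := by
  classical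
  induction s using Finset.induction with
  | empty => simp
  | insert a s hnot ih => simp [Finset.sum_insert hnot, Matrix.add_mulVec, ih]

lemma sftrl_dotProduct_sum {ι : Type*} (s : Finset ι) (v : Fin n → ℝ)
    (w : ι → Fin n → ℝ) : v ⬝ᵥ (∑ i ∈ s, w i) = ∑ i ∈ s, v ⬝ᵥ w i := by
  classical
  induction s using Finset.induction with
  | empty => simp
  | insert a s hnot ih => simp [Finset.sum_insert hnot, dotProduct_add, ih]

lemma sftrl_sum_dotProduct {ι : Type*} (s : Finset ι) (v : Fin n → ℝ)
    (w : ι → Fin n → ℝ) : (∑ i ∈ s, w i) ⬝ᵥ v = ∑ i ∈ s, w i ⬝ᵥ v := by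
  classical
  induction s using Finset.induction with
  | empty => simp
  | insert a s hnot ih => simp [Finset.sum_insert hnot, add_dotProduct, ih]

lemma sftrl_poly_deriv (a d e : ℝ) :
    HasDerivAt (fun s : ℝ => a + s * d + s ^ 2 * e) d 0 := by
  have h := (((hasDerivAt_id (0:ℝ)).mul_const d).const_add a).add
    ((hasDerivAt_pow 2 (0:ℝ)).mul_const e)
  simp at h
  exact h

lemma sftrl_self_deriv (V u : Fin n → ℝ) :
    HasDerivAt (fun s : ℝ => (V + s • u) ⬝ᵥ (V + s • u)) (2 * (V ⬝ᵥ u)) 0 := by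
  have heq : (fun s : ℝ => (V + s • u) ⬝ᵥ (V + s • u))
      = fun s : ℝ => V ⬝ᵥ V + s * (2 * (V ⬝ᵥ u)) + s ^ 2 * (u ⬝ᵥ u) := by
    funext s
    simp only [dotProduct_add, add_dotProduct, smul_dotProduct,
      dotProduct_smul, smul_eq_mul, dotProduct_comm u V]
    ring
  rw [heq]
  exact sftrl_poly_deriv _ _ _

lemma sftrl_quad_deriv (M : Matrix (Fin n) (Fin n) ℝ) (h : Mᵀ = M) (V u : Fin n → ℝ) :
    HasDerivAt (fun s : ℝ => (V + s • u) ⬝ᵥ M.mulVec (V + s • u))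
      (2 * (M.mulVec V ⬝ᵥ u)) 0 := by
  have heq : (fun s : ℝ => (V + s • u) ⬝ᵥ M.mulVec (V + s • u))
      = fun s : ℝ => V ⬝ᵥ M.mulVec V + s * (2 * (M.mulVec V ⬝ᵥ u)) + s ^ 2 * (u ⬝ᵥ M.mulVec u) := by
    funext s
    simp only [Matrix.mulVec_add, Matrix.mulVec_smul, dotProduct_add,
      add_dotProduct, smul_dotProduct, dotProduct_smul, smul_eq_mul]
    rw [sftrl_dot_symm M h V u, dotProduct_comm u (M.mulVec V)]
    ring
  rw [heq]
  exact sftrl_poly_deriv _ _ _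

lemma sftrl_lin_deriv (w V u : Fin n → ℝ) :
    HasDerivAt (fun s : ℝ => w ⬝ᵥ (V + s • u)) (w ⬝ᵥ u) 0 := by
  have heq : (fun s : ℝ => w ⬝ᵥ (V + s • u))
      = fun s : ℝ => w ⬝ᵥ V + s * (w ⬝ᵥ u) + s ^ 2 * 0 := by
    funext s
    simp [dotProduct_add, dotProduct_smul, smul_eq_mul, mul_comm]
  rw [heq]
  exact sftrl_poly_deriv _ _ _

end helpers

/-- Regret decomposition for FTRL with quadratic surrogate losses and improper
regularizers (Lemma 3 of the paper). The surrogates `ℓ̂ t` are quadratics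
`ℓhat t V = c t + ⟨b t, V⟩ + ⟨V, Q t V⟩` touching the losses `ℓ t` at the
iterates `Wt t` from below on `𝒲`; `A t = λ I + ∑_{s<t} Q s` so that
`L̂_t = λ‖·‖² + ∑_{s≤t} ℓ̂_s` is quadratic with positive definite Hessian
`2 A (t+1)`; `Wt t` minimizes `λ‖·‖² + ∑_{s<t} ℓ̂_s + φ t`; `gphi t` and `gl t`
are (Gâteaux) gradients of `φ t` and `ℓ t` at `Wt t`, with
`gl t = ∇ℓ̂ t (Wt t)`. Then for any comparator `W ∈ 𝒲`, the regret is at most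
`λ‖W‖² + (1/4) ∑_t [‖∇φ_t(W_t) - ∇ℓ_t(W_t)‖²_{A_t⁻¹} - ‖∇φ_t(W_t)‖²_{A_{t-1}⁻¹}]`. -/
theorem skewed_ftrl_regret (n T : ℕ) (lam : ℝ) (hlam : 0 < lam)
    (𝒲 : Set (Fin n → ℝ))
    (ℓ ℓhat φ : ℕ → (Fin n → ℝ) → ℝ)
    (Wt : ℕ → Fin n → ℝ)
    (b : ℕ → Fin n → ℝ) (c : ℕ → ℝ) (Q : ℕ → Matrix (Fin n) (Fin n) ℝ)
    (gl gphi : ℕ → Fin n → ℝ)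
    (A : ℕ → Matrix (Fin n) (Fin n) ℝ)
    (hA : ∀ t, A t = lam • (1 : Matrix (Fin n) (Fin n) ℝ) + ∑ s ∈ Finset.range t, Q s)
    (hQ : ∀ t < T, (Q t).PosSemidef)
    (hconv : ∀ t < T, ConvexOn ℝ Set.univ (ℓ t))
    (hlhat : ∀ t < T, ∀ V, ℓhat t V = c t + b t ⬝ᵥ V + V ⬝ᵥ (Q t).mulVec V)
    (htouch : ∀ t < T, ℓhat t (Wt t) = ℓ t (Wt t))
    (hle : ∀ t < T, ∀ V ∈ 𝒲, ℓhat t V ≤ ℓ t V)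
    (hmin : ∀ t < T, ∀ V,
      lam * (Wt t ⬝ᵥ Wt t) + (∑ s ∈ Finset.range t, ℓhat s (Wt t)) + φ t (Wt t)
        ≤ lam * (V ⬝ᵥ V) + (∑ s ∈ Finset.range t, ℓhat s V) + φ t V)
    (hgphi : ∀ t < T, ∀ u : Fin n → ℝ,
      HasDerivAt (fun s : ℝ => φ t (Wt t + s • u)) (gphi t ⬝ᵥ u) 0)
    (hgl : ∀ t < T, ∀ u : Fin n → ℝ,
      HasDerivAt (fun s : ℝ => ℓ t (Wt t + s • u)) (gl t ⬝ᵥ u) 0)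
    (hgleq : ∀ t < T, gl t = b t + (2 : ℝ) • (Q t).mulVec (Wt t))
    (W : Fin n → ℝ) (hW : W ∈ 𝒲) :
    ∑ t ∈ Finset.range T, (ℓ t (Wt t) - ℓ t W)
      ≤ lam * (W ⬝ᵥ W) +
        (1 / 4) * ∑ t ∈ Finset.range T,
          ((gphi t - gl t) ⬝ᵥ ((A (t + 1))⁻¹).mulVec (gphi t - gl t)
            - gphi t ⬝ᵥ ((A t)⁻¹).mulVec (gphi t)) := by
  classical
  set B : ℕ → Fin n → ℝ := fun t => ∑ s ∈ Finset.range t, b s with hBdef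
  set Cc : ℕ → ℝ := fun t => ∑ s ∈ Finset.range t, c s with hCcdef
  set G : ℕ → (Fin n → ℝ) → ℝ :=
    fun t V => lam * (V ⬝ᵥ V) + ∑ s ∈ Finset.range t, ℓhat s V with hGdef
  set gr : ℕ → (Fin n → ℝ) → (Fin n → ℝ) :=
    fun t V => (2:ℝ) • (A t).mulVec V + B t with hgrdef
  set m : ℕ → ℝ := fun t => Cc t - (1/4) * (B t ⬝ᵥ ((A t)⁻¹).mulVec (B t)) with hmdef
  -- symmetry of the Q's
  have hQsym : ∀ s < T, (Q s)ᵀ = Q s := by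
    intro s hs
    have h := (hQ s hs).isHermitian
    rw [Matrix.IsHermitian, Matrix.conjTranspose_eq_transpose_of_trivial] at h
    exact h
  -- symmetry of the A's
  have hAsym : ∀ t ≤ T, (A t)ᵀ = A t := by
    intro t ht
    rw [hA, Matrix.transpose_add, Matrix.transpose_smul, Matrix.transpose_one,
      Matrix.transpose_sum]
    congr 1
    exact Finset.sum_congr rfl fun s hs => hQsym s (lt_of_lt_of_le (Finset.mem_range.mp hs) ht)
  -- positive definiteness of the A's
  have hApd : ∀ t ≤ T, (A t).PosDef := by
    intro t ht
    rw [hA]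
    refine Matrix.PosDef.add_posSemidef (Matrix.PosDef.of_dotProduct_mulVec_pos ?_ ?_) ?_
    · show _ = _
      ext i j
      simp [Matrix.conjTranspose, Matrix.one_apply, eq_comm]
    · intro x hx
      have h0 : (0:ℝ) ≤ x ⬝ᵥ x := Finset.sum_nonneg fun i _ => mul_self_nonneg _
      have h1 : x ⬝ᵥ x ≠ 0 := fun h => hx (dotProduct_self_eq_zero.mp h)
      simp only [Matrix.smul_mulVec, Matrix.one_mulVec, dotProduct_smul,
        star_trivial, smul_eq_mul]
      exact mul_pos hlam (lt_of_le_of_ne h0 (Ne.symm h1))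
    · refine Finset.sum_induction Q _ (fun a b' ha hb => ha.add hb) Matrix.PosSemidef.zero ?_
      exact fun s hs => hQ s (lt_of_lt_of_le (Finset.mem_range.mp hs) ht)
  have hAinv : ∀ t ≤ T, (A t)⁻¹ * A t = 1 := fun t ht =>
    Matrix.nonsing_inv_mul _ (isUnit_iff_ne_zero.mpr (hApd t ht).det_pos.ne')
  have hAinvsym : ∀ t ≤ T, ((A t)⁻¹)ᵀ = (A t)⁻¹ := by
    intro t ht
    rw [Matrix.transpose_nonsing_inv, hAsym t ht]
  -- expansion of G
  have hexp : ∀ t ≤ T, ∀ V, G t V = V ⬝ᵥ (A t).mulVec V + B t ⬝ᵥ V + Cc t := by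
    intro t ht V
    have h1 : ∑ s ∈ Finset.range t, ℓhat s V
        = Cc t + B t ⬝ᵥ V + ∑ s ∈ Finset.range t, V ⬝ᵥ (Q s).mulVec V := by
      rw [Finset.sum_congr rfl
        (fun s hs => hlhat s (lt_of_lt_of_le (Finset.mem_range.mp hs) ht) V)]
      rw [Finset.sum_add_distrib, Finset.sum_add_distrib, hBdef, hCcdef]
      simp [sftrl_sum_dotProduct]
    rw [hGdef]
    simp only
    rw [h1, hA, Matrix.add_mulVec, dotProduct_add, sftrl_sum_mulVec,
      sftrl_dotProduct_sum, Matrix.smul_mulVec, Matrix.one_mulVec,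
      dotProduct_smul, smul_eq_mul]
    ring
  -- the quadratic minimum identity
  have hkey : ∀ t ≤ T, ∀ V,
      G t V = m t + (1/4) * (gr t V ⬝ᵥ ((A t)⁻¹).mulVec (gr t V)) := by
    intro t ht V
    have hinv := hAinv t ht
    have h2 : ((A t)⁻¹).mulVec (gr t V) = (2:ℝ) • V + ((A t)⁻¹).mulVec (B t) := by
      simp only [hgrdef, Matrix.mulVec_add, Matrix.mulVec_smul, Matrix.mulVec_mulVec,
        hinv, Matrix.one_mulVec]
    have hc : (A t).mulVec V ⬝ᵥ ((A t)⁻¹).mulVec (B t) = B t ⬝ᵥ V := by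
      rw [sftrl_dot_symm _ (hAinvsym t ht), Matrix.mulVec_mulVec, hinv, Matrix.one_mulVec]
    have h3 : gr t V ⬝ᵥ ((A t)⁻¹).mulVec (gr t V)
        = 4 * (V ⬝ᵥ (A t).mulVec V) + 4 * (B t ⬝ᵥ V) + B t ⬝ᵥ ((A t)⁻¹).mulVec (B t) := by
      rw [h2]
      simp only [hgrdef, add_dotProduct, dotProduct_add,
        smul_dotProduct, dotProduct_smul, smul_eq_mul]
      rw [hc, dotProduct_comm ((A t).mulVec V) V]
      ring
    rw [hexp t ht V, hmdef, h3]
    ring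
  -- first-order optimality at Wt t
  have hgrad : ∀ t < T, gr t (Wt t) = - gphi t := by
    intro t ht
    have key : ∀ u : Fin n → ℝ, (gr t (Wt t) + gphi t) ⬝ᵥ u = 0 := by
      intro u
      have hq0 : HasDerivAt (fun s : ℝ => lam * ((Wt t + s • u) ⬝ᵥ (Wt t + s • u)))
          (lam * (2 * (Wt t ⬝ᵥ u))) 0 := (sftrl_self_deriv (Wt t) u).const_mul lam
      have hterm : ∀ r ∈ Finset.range t,
          HasDerivAt (fun s : ℝ => ℓhat r (Wt t + s • u))
            ((b r + (2:ℝ) • (Q r).mulVec (Wt t)) ⬝ᵥ u) 0 := by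
        intro r hr
        have hrT : r < T := lt_trans (Finset.mem_range.mp hr) ht
        have heq : (fun s : ℝ => ℓhat r (Wt t + s • u))
            = fun s : ℝ => c r + b r ⬝ᵥ (Wt t + s • u)
              + (Wt t + s • u) ⬝ᵥ (Q r).mulVec (Wt t + s • u) :=
          funext fun s => hlhat r hrT _
        rw [heq]
        have h := ((hasDerivAt_const (0:ℝ) (c r)).add (sftrl_lin_deriv (b r) (Wt t) u)).add
          (sftrl_quad_deriv (Q r) (hQsym r hrT) (Wt t) u)
        have hval : 0 + b r ⬝ᵥ u + 2 * ((Q r).mulVec (Wt t) ⬝ᵥ u)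
            = (b r + (2:ℝ) • (Q r).mulVec (Wt t)) ⬝ᵥ u := by
          simp only [add_dotProduct, smul_dotProduct, smul_eq_mul]
          ring
        rw [hval] at h
        exact h
      have hsum : HasDerivAt (fun s : ℝ => ∑ r ∈ Finset.range t, ℓhat r (Wt t + s • u))
          (∑ r ∈ Finset.range t, (b r + (2:ℝ) • (Q r).mulVec (Wt t)) ⬝ᵥ u) 0 :=
        HasDerivAt.fun_sum hterm
      have hder : HasDerivAt (fun s : ℝ =>
          lam * ((Wt t + s • u) ⬝ᵥ (Wt t + s • u))
            + (∑ r ∈ Finset.range t, ℓhat r (Wt t + s • u)) + φ t (Wt t + s • u))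
          ((gr t (Wt t) + gphi t) ⬝ᵥ u) 0 := by
        have h := (hq0.add hsum).add (hgphi t ht u)
        have hval : lam * (2 * (Wt t ⬝ᵥ u))
            + (∑ r ∈ Finset.range t, (b r + (2:ℝ) • (Q r).mulVec (Wt t)) ⬝ᵥ u)
            + gphi t ⬝ᵥ u = (gr t (Wt t) + gphi t) ⬝ᵥ u := by
          simp only [hgrdef, hBdef, add_dotProduct, smul_dotProduct,
            smul_eq_mul, sftrl_sum_dotProduct, sftrl_sum_dotProduct (Finset.range t),
            Finset.sum_add_distrib]
          rw [hA, Matrix.add_mulVec, Matrix.smul_mulVec, Matrix.one_mulVec,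
            sftrl_sum_mulVec]
          simp only [add_dotProduct, smul_dotProduct, smul_eq_mul,
            sftrl_sum_dotProduct]
          rw [← Finset.mul_sum]
          ring
        rw [hval] at h
        exact h
      have hloc : IsLocalMin (fun s : ℝ =>
          lam * ((Wt t + s • u) ⬝ᵥ (Wt t + s • u))
            + (∑ r ∈ Finset.range t, ℓhat r (Wt t + s • u)) + φ t (Wt t + s • u)) 0 := by
        apply Filter.Eventually.of_forall
        intro s
        simpa using hmin t ht (Wt t + s • u)
      exact hloc.hasDerivAt_eq_zero hder
    have hv : gr t (Wt t) + gphi t = 0 := dotProduct_eq_zero _ key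
    exact eq_neg_of_add_eq_zero_left hv
  -- successor matrices and gradients
  have hAsucc : ∀ t : ℕ, A (t+1) = A t + Q t := by
    intro t; rw [hA, hA, Finset.sum_range_succ, ← add_assoc]
  have hgrsucc : ∀ t < T, gr (t+1) (Wt t) = gl t - gphi t := by
    intro t ht
    have h : gr (t+1) (Wt t) = gr t (Wt t) + (b t + (2:ℝ) • (Q t).mulVec (Wt t)) := by
      simp only [hgrdef, hBdef, hAsucc, Finset.sum_range_succ, Matrix.add_mulVec, smul_add]
      abel
    rw [h, hgrad t ht, ← hgleq t ht]
    abel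
  -- per-round identity
  have hDt : ∀ t < T, ℓhat t (Wt t)
      = (m (t+1) - m t) + (1/4) * ((gphi t - gl t) ⬝ᵥ ((A (t+1))⁻¹).mulVec (gphi t - gl t)
          - gphi t ⬝ᵥ ((A t)⁻¹).mulVec (gphi t)) := by
    intro t ht
    have h1 : ℓhat t (Wt t) = G (t+1) (Wt t) - G t (Wt t) := by
      simp [hGdef, Finset.sum_range_succ]
    have h2 := hkey (t+1) (by omega) (Wt t)
    have h3 := hkey t (le_of_lt ht) (Wt t)
    rw [hgrsucc t ht] at h2
    rw [hgrad t ht] at h3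
    have e2 : (gl t - gphi t) ⬝ᵥ ((A (t+1))⁻¹).mulVec (gl t - gphi t)
        = (gphi t - gl t) ⬝ᵥ ((A (t+1))⁻¹).mulVec (gphi t - gl t) := by
      have hneg : gl t - gphi t = -(gphi t - gl t) := by abel
      rw [hneg, neg_dotProduct, Matrix.mulVec_neg, dotProduct_neg, neg_neg]
    have e3 : (- gphi t) ⬝ᵥ ((A t)⁻¹).mulVec (- gphi t)
        = gphi t ⬝ᵥ ((A t)⁻¹).mulVec (gphi t) := by
      rw [neg_dotProduct, Matrix.mulVec_neg, dotProduct_neg, neg_neg]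
    rw [e2] at h2
    rw [e3] at h3
    rw [h1, h2, h3]
    ring
  have hm0 : m 0 = 0 := by simp [hmdef, hBdef, hCcdef]
  have hsum1 : ∑ t ∈ Finset.range T, ℓhat t (Wt t)
      = m T + (1/4) * ∑ t ∈ Finset.range T,
          ((gphi t - gl t) ⬝ᵥ ((A (t+1))⁻¹).mulVec (gphi t - gl t)
            - gphi t ⬝ᵥ ((A t)⁻¹).mulVec (gphi t)) := by
    rw [Finset.sum_congr rfl (fun t ht => hDt t (Finset.mem_range.mp ht))]
    rw [Finset.sum_add_distrib, Finset.sum_range_sub m, ← Finset.mul_sum, hm0]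
    ring
  have hsum2 : ∑ t ∈ Finset.range T, ℓhat t W = G T W - lam * (W ⬝ᵥ W) := by
    simp [hGdef]
  have hGTW : m T ≤ G T W := by
    rw [hkey T le_rfl W]
    have hps := ((hApd T le_rfl).inv).posSemidef.dotProduct_mulVec_nonneg (gr T W)
    simp only [star_trivial] at hps
    linarith
  have hterm : ∀ t ∈ Finset.range T, ℓ t (Wt t) - ℓ t W ≤ ℓhat t (Wt t) - ℓhat t W := by
    intro t ht
    have h1 := hle t (Finset.mem_range.mp ht) W hW
    have h2 := htouch t (Finset.mem_range.mp ht)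
    linarith
  calc ∑ t ∈ Finset.range T, (ℓ t (Wt t) - ℓ t W)
      ≤ ∑ t ∈ Finset.range T, (ℓhat t (Wt t) - ℓhat t W) := Finset.sum_le_sum hterm
    _ = (∑ t ∈ Finset.range T, ℓhat t (Wt t)) - ∑ t ∈ Finset.range T, ℓhat t W :=
        Finset.sum_sub_distrib _ _
    _ ≤ _ := by
        rw [hsum1, hsum2]
        set S := ∑ t ∈ Finset.range T,
          ((gphi t - gl t) ⬝ᵥ ((A (t + 1))⁻¹).mulVec (gphi t - gl t)
            - gphi t ⬝ᵥ ((A t)⁻¹).mulVec (gphi t)) with hS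
        clear_value S
        have hmT : m T ≤ G T W := hGTW
        clear_value m G
        linarith
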